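/- Let G be an η-good graph on n vertices (with 1/n ≤ 1/k, η ≤ 1) and let X ⊆ V(G) with |X| ≥ n/3 + k. Then the number of edges of G with both endpoints in X exceeds k²/2. -/

import Mathlib

/-- In an `η`-good graph `G` on `n` vertices, if `|X| ≥ n/3 + k`
then the number of edges of `G` inside `X` exceeds `k²/2`. -/
theorem stmt6 (η : ℝ) (hη0 : 0 < η) (hη1 : η ≤ 1) :
    ∃ n₀ : ℕ, ∀ n : ℕ, n₀ ≤ n → ∀ k : ℕ, 1 ≤ k → k ≤ n →
    ∀ G : SimpleGraph (Fin n),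
      (∀ X : Finset (Fin n), 1 ≤ X.card → 3 * X.card ≤ n →
        ∃ x ∈ X, ((G.neighborSet x).ncard : ℝ) ≥ (1/3 + η) * n + X.card + 1) →
      ∀ X : Finset (Fin n), (n : ℝ) / 3 + k ≤ X.card →
        (k : ℝ) ^ 2 / 2 <
          (({e : Sym2 (Fin n) | e ∈ G.edgeSet ∧ ∀ v ∈ e, v ∈ X}).ncard : ℝ) := by
  classical
  refine ⟨3, fun n hn k hk1 hkn G hG X hX => ?_⟩
  set j := n / 3 with hjdef
  have hj1 : 1 ≤ j := by omega
  have hj3 : 3 * j ≤ n := by omega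
  have hj3' : n < 3 * (j + 1) := by omega
  have hjr1 : (j : ℝ) ≤ (n : ℝ) / 3 := by
    have h : ((3 * j : ℕ) : ℝ) ≤ (n : ℝ) := by exact_mod_cast hj3
    push_cast at h; linarith
  have hjr2 : (n : ℝ) / 3 < (j : ℝ) + 1 := by
    have h : (n : ℝ) < ((3 * (j + 1) : ℕ) : ℝ) := by exact_mod_cast hj3'
    push_cast at h; linarith
  have hn0 : (1 : ℝ) ≤ (n : ℝ) := by exact_mod_cast by omega
  -- degrees vs ncard of neighborSet
  have hdeg : ∀ x : Fin n, ((G.neighborSet x).ncard : ℝ) = (G.degree x : ℝ) := by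
    intro x
    rw [Set.ncard_eq_toFinset_card']
    congr 1
  -- the induced graph on X
  let G' : SimpleGraph (Fin n) :=
    { Adj := fun a b => G.Adj a b ∧ a ∈ X ∧ b ∈ X
      symm := ⟨fun a b ⟨h, ha, hb⟩ => ⟨h.symm, hb, ha⟩⟩
      loopless := ⟨fun a ⟨h, _, _⟩ => G.loopless.irrefl a h⟩ }
  have hEdge : {e : Sym2 (Fin n) | e ∈ G.edgeSet ∧ ∀ v ∈ e, v ∈ X} = G'.edgeSet := by
    ext e
    induction e with
    | _ a b =>
      simp only [Set.mem_setOf_eq, SimpleGraph.mem_edgeSet, Sym2.mem_iff]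
      constructor
      · rintro ⟨h, hv⟩
        exact ⟨h, hv a (Or.inl rfl), hv b (Or.inr rfl)⟩
      · rintro ⟨h, ha, hb⟩
        exact ⟨h, fun v hv => by rcases hv with rfl | rfl <;> assumption⟩
  have hncard : ({e : Sym2 (Fin n) | e ∈ G.edgeSet ∧ ∀ v ∈ e, v ∈ X}).ncard
      = G'.edgeFinset.card := by
    rw [hEdge, ← SimpleGraph.coe_edgeFinset, Set.ncard_coe_finset]
  -- counting neighbors inside X
  have hsub : ∀ v ∈ X, (G.degree v : ℕ) ≤ G'.degree v + (n - X.card) := by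
    intro v hv
    have hss : G.neighborFinset v ⊆ G'.neighborFinset v ∪ Xᶜ := by
      intro b hb
      rw [SimpleGraph.mem_neighborFinset] at hb
      rw [Finset.mem_union]
      by_cases hbX : b ∈ X
      · exact Or.inl (by rw [SimpleGraph.mem_neighborFinset]; exact ⟨hb, hv, hbX⟩)
      · exact Or.inr (Finset.mem_compl.2 hbX)
    calc G.degree v ≤ (G'.neighborFinset v ∪ Xᶜ).card := Finset.card_le_card hss
      _ ≤ G'.degree v + Xᶜ.card := Finset.card_union_le _ _
      _ = G'.degree v + (n - X.card) := by
          rw [Finset.card_compl, Fintype.card_fin]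
  have hXn : X.card ≤ n := by
    have := Finset.card_le_univ X
    simpa using this
  -- bad vertices
  set B := X.filter (fun v => (G.degree v : ℝ) < (1/3 + η) * n + j + 1) with hBdef
  have hBcard : B.card < j := by
    by_contra h
    push_neg at h
    obtain ⟨S, hSB, hScard⟩ := Finset.exists_subset_card_eq h
    obtain ⟨x, hxS, hx⟩ := hG S (by omega) (by omega)
    rw [hdeg x, hScard] at hx
    have hxB := hSB hxS
    have := (Finset.mem_filter.1 hxB).2
    push_cast at hx this
    linarith
  -- good vertices
  set A := X \ B with hAdef
  have hAdeg : ∀ v ∈ A, k + 1 ≤ G'.degree v := by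
    intro v hv
    rw [Finset.mem_sdiff] at hv
    obtain ⟨hvX, hvB⟩ := hv
    have hdv : (1/3 + η) * n + j + 1 ≤ (G.degree v : ℝ) := by
      by_contra hc
      push_neg at hc
      exact hvB (Finset.mem_filter.2 ⟨hvX, hc⟩)
    have h1 : (G.degree v : ℝ) ≤ (G'.degree v : ℝ) + ((n : ℝ) - X.card) := by
      have := hsub v hvX
      have h2 : ((n - X.card : ℕ) : ℝ) = (n : ℝ) - X.card := by
        push_cast [hXn]; ring
      calc (G.degree v : ℝ) ≤ ((G'.degree v + (n - X.card) : ℕ) : ℝ) := by exact_mod_cast this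
        _ = (G'.degree v : ℝ) + ((n : ℝ) - X.card) := by push_cast [hXn]; ring
    have hηn : 0 < η * n := mul_pos hη0 (by linarith)
    have : (k : ℝ) < (G'.degree v : ℝ) := by linarith
    exact_mod_cast by exact_mod_cast Nat.succ_le_of_lt (by exact_mod_cast this)
  have hAcard : k + 1 ≤ A.card := by
    have hBX : B ⊆ X := Finset.filter_subset _ _
    have h1 : A.card = X.card - B.card := Finset.card_sdiff_of_subset hBX
    have hBX' : B.card ≤ X.card := Finset.card_le_card hBX
    have h2 : ((X.card - B.card : ℕ) : ℝ) = (X.card : ℝ) - B.card := by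
      push_cast [hBX']; ring
    have hBr : (B.card : ℝ) ≤ (j : ℝ) - 1 := by
      have h : ((B.card + 1 : ℕ) : ℝ) ≤ (j : ℝ) := by exact_mod_cast hBcard
      push_cast at h; linarith
    have : ((k : ℝ) + 1) ≤ (A.card : ℝ) := by
      rw [h1, h2]; linarith
    exact_mod_cast this
  -- sum of degrees
  have hsum : ∑ v, G'.degree v = 2 * G'.edgeFinset.card :=
    G'.sum_degrees_eq_twice_card_edges
  have h1 : A.card * (k + 1) ≤ ∑ v ∈ A, G'.degree v := by
    calc A.card * (k + 1) = A.card • (k + 1) := by rw [smul_eq_mul]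
      _ ≤ ∑ v ∈ A, G'.degree v := Finset.card_nsmul_le_sum A _ _ hAdeg
  have h2 : ∑ v ∈ A, G'.degree v ≤ ∑ v, G'.degree v :=
    Finset.sum_le_sum_of_subset (Finset.subset_univ A)
  have hfin : (k + 1) * (k + 1) ≤ 2 * G'.edgeFinset.card := by
    calc (k + 1) * (k + 1) ≤ A.card * (k + 1) :=
          Nat.mul_le_mul_right _ hAcard
      _ ≤ ∑ v ∈ A, G'.degree v := h1
      _ ≤ ∑ v, G'.degree v := h2
      _ = 2 * G'.edgeFinset.card := hsum
  rw [hncard]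
  have : ((k + 1) * (k + 1) : ℝ) ≤ 2 * (G'.edgeFinset.card : ℝ) := by
    exact_mod_cast hfin
  nlinarith [this]
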